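/- Let n ≥ 5 and let M be an n×n matrix over a finite field F_{2^r} all of whose entries lie in {0, 1} (the subfield elements 0 and 1 of F_{2^r}). Then M is not an NMDS matrix; moreover, for every positive integer k, M^k is not an NMDS matrix (so M is not k-NMDS for any k). -/

import Mathlib

open Matrix

/-- The Hamming weight of a vector: the number of nonzero coordinates. -/
def wt {F : Type*} [Zero F] [DecidableEq F] {n : ℕ} (x : Fin n → F) : ℕ :=
  (Finset.univ.filter fun i => x i ≠ 0).card

/-- The differential branch number of a square matrix `M`:
the minimum of `wt x + wt (M x)` over all nonzero vectors `x`. -/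
noncomputable def branchD {F : Type*} [Field F] [DecidableEq F] {n : ℕ}
    (M : Matrix (Fin n) (Fin n) F) : ℕ :=
  sInf {k | ∃ x : Fin n → F, x ≠ 0 ∧ k = wt x + wt (M.mulVec x)}

/-- The linear branch number of a square matrix `M`:
the minimum of `wt x + wt (Mᵀ x)` over all nonzero vectors `x`. -/
noncomputable def branchL {F : Type*} [Field F] [DecidableEq F] {n : ℕ}
    (M : Matrix (Fin n) (Fin n) F) : ℕ :=
  sInf {k | ∃ x : Fin n → F, x ≠ 0 ∧ k = wt x + wt (Mᵀ.mulVec x)}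

/-- A square matrix of order `n` is near-MDS (NMDS) if both its differential
and linear branch numbers equal `n`. -/
def IsNMDS {F : Type*} [Field F] [DecidableEq F] {n : ℕ}
    (M : Matrix (Fin n) (Fin n) F) : Prop :=
  branchD M = n ∧ branchL M = n

lemma branchD_lt_of_01 {F : Type*} [Field F] [DecidableEq F] [CharP F 2] {n : ℕ}
    (hn : 5 ≤ n) (M : Matrix (Fin n) (Fin n) F)
    (h01 : ∀ i j, M i j = 0 ∨ M i j = 1) : branchD M < n := by
  set i0 : Fin n := ⟨0, by omega⟩ with hi0
  set i1 : Fin n := ⟨1, by omega⟩ with hi1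
  set i2 : Fin n := ⟨2, by omega⟩ with hi2
  have hd01 : i0 ≠ i1 := by simp [hi0, hi1, Fin.ext_iff]
  have hd02 : i0 ≠ i2 := by simp [hi0, hi2, Fin.ext_iff]
  have hd12 : i1 ≠ i2 := by simp [hi1, hi2, Fin.ext_iff]
  set X : F → F → F → Fin n → F := fun c0 c1 c2 j =>
    (if j = i0 then c0 else 0) + (if j = i1 then c1 else 0) +
      (if j = i2 then c2 else 0) with hXdef
  have hmv : ∀ c0 c1 c2 t, M.mulVec (X c0 c1 c2) t
      = M t i0 * c0 + M t i1 * c1 + M t i2 * c2 := by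
    intro c0 c1 c2 t
    simp [Matrix.mulVec, dotProduct, hXdef, mul_add, Finset.sum_add_distrib, mul_ite, mul_zero,
      Finset.sum_ite_eq']
  have hne : ∀ c0 c1 c2 : F, (c0 ≠ 0 ∨ c1 ≠ 0 ∨ c2 ≠ 0) → X c0 c1 c2 ≠ 0 := by
    intro c0 c1 c2 hc h
    have h0 := congrFun h i0
    have h1 := congrFun h i1
    have h2 := congrFun h i2
    simp only [hXdef, Pi.zero_apply, if_pos rfl, if_neg hd01, if_neg hd02, if_neg hd12,
      if_neg (Ne.symm hd01), if_neg (Ne.symm hd02), if_neg (Ne.symm hd12),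
      add_zero, zero_add] at h0 h1 h2
    tauto
  have hwtx : ∀ c0 c1 c2 : F, wt (X c0 c1 c2) ≤
      (if c0 = 0 then 0 else 1) + (if c1 = 0 then 0 else 1) + (if c2 = 0 then 0 else 1) := by
    intro c0 c1 c2
    have hsub : (Finset.univ.filter fun j => X c0 c1 c2 j ≠ 0) ⊆
        ((if c0 = 0 then ∅ else {i0}) ∪ (if c1 = 0 then ∅ else {i1}) ∪
          (if c2 = 0 then ∅ else {i2}) : Finset (Fin n)) := by
      intro j hj
      simp only [Finset.mem_filter, Finset.mem_univ, true_and, hXdef] at hj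
      simp only [Finset.mem_union]
      by_cases e0 : j = i0
      · subst e0
        rw [if_pos rfl, if_neg hd01, if_neg hd02, add_zero, add_zero] at hj
        left; left; rw [if_neg hj]; exact Finset.mem_singleton_self _
      · by_cases e1 : j = i1
        · subst e1
          rw [if_pos rfl, if_neg (Ne.symm hd01), if_neg hd12, add_zero, zero_add] at hj
          left; right; rw [if_neg hj]; exact Finset.mem_singleton_self _
        · by_cases e2 : j = i2
          · subst e2
            rw [if_pos rfl, if_neg (Ne.symm hd02), if_neg (Ne.symm hd12), zero_add, zero_add] at hj
            right; rw [if_neg hj]; exact Finset.mem_singleton_self _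
          · simp [e0, e1, e2] at hj
    refine le_trans (Finset.card_le_card hsub) ?_
    refine le_trans (Finset.card_union_le _ _) ?_
    refine le_trans (Nat.add_le_add_right (Finset.card_union_le _ _) _) ?_
    gcongr <;> split_ifs <;> simp
  have hwtv : ∀ v : Fin n → F, wt v = ∑ t : Fin n, if v t = 0 then 0 else 1 := by
    intro v
    rw [wt, Finset.card_filter]
    exact Finset.sum_congr rfl fun t _ => by split_ifs with h <;> simp_all
  have key : ∀ t : Fin n,
      ((if M.mulVec (X 1 0 0) t = 0 then 0 else 1) + (if M.mulVec (X 0 1 0) t = 0 then 0 else 1) +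
       (if M.mulVec (X 0 0 1) t = 0 then 0 else 1) + (if M.mulVec (X 1 1 0) t = 0 then 0 else 1) +
       (if M.mulVec (X 1 0 1) t = 0 then 0 else 1) + (if M.mulVec (X 0 1 1) t = 0 then 0 else 1) +
       (if M.mulVec (X 1 1 1) t = 0 then 0 else 1)) ≤ 4 := by
    intro t
    rcases h01 t i0 with ha|ha <;> rcases h01 t i1 with hb|hb <;> rcases h01 t i2 with hc|hc <;>
      simp [hmv, ha, hb, hc, CharTwo.add_self_eq_zero]
  have hsum : wt (M.mulVec (X 1 0 0)) + wt (M.mulVec (X 0 1 0)) + wt (M.mulVec (X 0 0 1)) +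
      wt (M.mulVec (X 1 1 0)) + wt (M.mulVec (X 1 0 1)) + wt (M.mulVec (X 0 1 1)) +
      wt (M.mulVec (X 1 1 1)) ≤ 4 * n := by
    rw [hwtv, hwtv, hwtv, hwtv, hwtv, hwtv, hwtv, ← Finset.sum_add_distrib,
      ← Finset.sum_add_distrib, ← Finset.sum_add_distrib, ← Finset.sum_add_distrib,
      ← Finset.sum_add_distrib, ← Finset.sum_add_distrib]
    calc _ ≤ ∑ _t : Fin n, 4 := Finset.sum_le_sum fun t _ => key t
      _ = 4 * n := by simp [mul_comm]
  by_contra hcon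
  push_neg at hcon
  have hmem : ∀ c0 c1 c2 : F, (c0 ≠ 0 ∨ c1 ≠ 0 ∨ c2 ≠ 0) →
      n ≤ wt (X c0 c1 c2) + wt (M.mulVec (X c0 c1 c2)) := by
    intro c0 c1 c2 hc
    exact le_trans hcon (Nat.sInf_le ⟨X c0 c1 c2, hne c0 c1 c2 hc, rfl⟩)
  have m1 := hmem 1 0 0 (by simp)
  have m2 := hmem 0 1 0 (by simp)
  have m3 := hmem 0 0 1 (by simp)
  have m4 := hmem 1 1 0 (by simp)
  have m5 := hmem 1 0 1 (by simp)
  have m6 := hmem 0 1 1 (by simp)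
  have m7 := hmem 1 1 1 (by simp)
  have b1 : wt (X (1:F) 0 0) ≤ 1 := by simpa using hwtx 1 0 0
  have b2 : wt (X (0:F) 1 0) ≤ 1 := by simpa using hwtx 0 1 0
  have b3 : wt (X (0:F) 0 1) ≤ 1 := by simpa using hwtx 0 0 1
  have b4 : wt (X (1:F) 1 0) ≤ 2 := by simpa using hwtx 1 1 0
  have b5 : wt (X (1:F) 0 1) ≤ 2 := by simpa using hwtx 1 0 1
  have b6 : wt (X (0:F) 1 1) ≤ 2 := by simpa using hwtx 0 1 1
  have b7 : wt (X (1:F) 1 1) ≤ 3 := by simpa using hwtx 1 1 1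
  omega

lemma pow01 {F : Type*} [Field F] [DecidableEq F] [CharP F 2] {n : ℕ}
    (M : Matrix (Fin n) (Fin n) F) (h01 : ∀ i j, M i j = 0 ∨ M i j = 1) :
    ∀ k : ℕ, ∀ i j, (M ^ k) i j = 0 ∨ (M ^ k) i j = 1 := by
  intro k
  induction k with
  | zero =>
    intro i j
    rw [pow_zero]
    by_cases h : i = j <;> simp [Matrix.one_apply, h]
  | succ k ih =>
    intro i j
    rw [pow_succ, Matrix.mul_apply]
    refine Finset.sum_induction _ (fun x => x = 0 ∨ x = 1) ?_ (Or.inl rfl) ?_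
    · rintro a b (rfl|rfl) (rfl|rfl) <;> simp
      rw [one_add_one_eq_two]; exact CharTwo.two_eq_zero
    · intro l _
      rcases ih i l with h1|h1 <;> rcases h01 l j with h2|h2 <;> simp [h1, h2]

/-- For n ≥ 5, a matrix whose entries all lie in {0, 1} is not NMDS, and no
positive power of it is NMDS. -/
theorem stmt_16 {F : Type*} [Field F] [Fintype F] [DecidableEq F] [CharP F 2]
    {n : ℕ} (hn : 5 ≤ n) (M : Matrix (Fin n) (Fin n) F)
    (h01 : ∀ i j, M i j = 0 ∨ M i j = 1) :
    ¬ IsNMDS M ∧ ∀ k : ℕ, 0 < k → ¬ IsNMDS (M ^ k) := by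
  have main : ∀ A : Matrix (Fin n) (Fin n) F,
      (∀ i j, A i j = 0 ∨ A i j = 1) → ¬ IsNMDS A := by
    intro A hA h
    exact absurd h.1 (Nat.ne_of_lt (branchD_lt_of_01 hn A hA))
  exact ⟨main M h01, fun k _ => main (M ^ k) (pow01 M h01 k)⟩
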